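/- arXiv:1903.03708 — 5 statements merged into one kernel-verified Lean document; each statement's English description precedes it below -/
import Mathlib

section
/- Let c_n be defined by c_0 = 0 and c_n = (n-1) + (2/n)·∑_{k=0}^{n-1} c_k for n ≥ 1. Then for all n ≥ 1, c_n = 2(n+1)H_n − 4n, where H_n = ∑_{i=1}^{n} 1/i. -/
open Filter Real Finset Polynomial Asymptotics

theorem quicksort_mean_closed_form
    (c : ℕ → ℚ)
    (hc0 : c 0 = 0)
    (hcrec : ∀ n : ℕ, 1 ≤ n →
      c n = ((n : ℚ) - 1) + (2 / (n : ℚ)) * ∑ k ∈ Finset.range n, c k)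
    (H : ℕ → ℕ → ℚ)
    (hH : ∀ p n : ℕ, H p n = ∑ i ∈ Finset.Icc 1 n, 1 / (i : ℚ) ^ p) :
    ∀ n : ℕ, 1 ≤ n → c n = 2 * ((n : ℚ) + 1) * H 1 n - 4 * (n : ℚ) := by
  -- harmonic numbers
  set h : ℕ → ℚ := fun n => ∑ i ∈ Finset.Icc 1 n, 1 / (i : ℚ) with hh
  have hHh : ∀ n, H 1 n = h n := by
    intro n; rw [hH]; simp [hh]
  have hsucc : ∀ n : ℕ, h (n + 1) = h n + 1 / ((n : ℚ) + 1) := by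
    intro n
    simp only [hh]
    rw [Finset.sum_Icc_succ_top (by omega : 1 ≤ n + 1)]
    push_cast; ring
  -- key sum lemma
  have key : ∀ n : ℕ, ∑ k ∈ Finset.range n, c k
      = (n : ℚ) * (2 * ((n : ℚ) + 1) * h n - 5 * n + 1) / 2 := by
    intro n
    induction n with
    | zero => simp [hh]
    | succ n ih =>
      rw [Finset.sum_range_succ, ih]
      rcases Nat.eq_zero_or_pos n with hn | hn
      · subst hn
        simp [hc0, hh]
        norm_num
      · have hne : (n : ℚ) ≠ 0 := by positivity
        rw [hcrec n hn, ih, hsucc]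
        have hne1 : (n : ℚ) + 1 ≠ 0 := by positivity
        field_simp
        push_cast
        ring
  intro n hn
  rw [hcrec n hn, key, hHh]
  have hne : (n : ℚ) ≠ 0 := by
    simp; omega
  field_simp
  ring
end

section
/- Let c_n be defined by c_0 = 0 and c_n = (n-1) + (2/n)·∑_{k=0}^{n-1} c_k for n ≥ 1. Then c_n/(n·log n) tends to 2 as n → ∞; in particular c_n = O(n log n). -/
open Filter Real Finset Polynomial Asymptotics

theorem quicksort_mean_asymptotics
    (c : ℕ → ℚ)
    (hc0 : c 0 = 0)
    (hcrec : ∀ n : ℕ, 1 ≤ n →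
      c n = ((n : ℚ) - 1) + (2 / (n : ℚ)) * ∑ k ∈ Finset.range n, c k) :
    Filter.Tendsto (fun n : ℕ => (c n : ℝ) / ((n : ℝ) * Real.log n))
      Filter.atTop (nhds 2) ∧
    (fun n : ℕ => (c n : ℝ)) =O[Filter.atTop]
      (fun n : ℕ => (n : ℝ) * Real.log n) := by
  have hc1 : c 1 = 0 := by
    have := hcrec 1 le_rfl
    simpa [hc0] using this
  -- step recurrence: (n+1) c(n+1) = (n+2) c n + 2n for n ≥ 1
  have hstep : ∀ n : ℕ, 1 ≤ n →
      ((n : ℚ) + 1) * c (n + 1) = ((n : ℚ) + 2) * c n + 2 * n := by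
    intro n hn
    have hn0 : (n : ℚ) ≠ 0 := Nat.cast_ne_zero.mpr (Nat.one_le_iff_ne_zero.mp hn)
    have h1 := hcrec n hn
    have h2 := hcrec (n + 1) (Nat.le_add_left 1 n)
    rw [Finset.sum_range_succ] at h2
    push_cast at h2
    have hn1 : (n : ℚ) + 1 ≠ 0 := by positivity
    -- multiply out
    have e1 : (n : ℚ) * c n = n * (n - 1) + 2 * ∑ k ∈ Finset.range n, c k := by
      rw [h1]; field_simp
    have e2 : ((n : ℚ) + 1) * c (n + 1)
        = (n + 1) * n + 2 * (∑ k ∈ Finset.range n, c k) + 2 * c n := by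
      rw [h2]; field_simp; ring
    linarith [e1, e2]
  -- closed form
  have hform : ∀ n : ℕ, c n = 2 * ((n : ℚ) + 1) * harmonic n - 4 * n := by
    intro n
    induction n with
    | zero => simp [hc0]
    | succ m ih =>
      rcases Nat.eq_zero_or_pos m with hm | hm
      · subst hm
        simp [hc1, harmonic_succ]
        norm_num [harmonic_zero]
      · have hs := hstep m hm
        have hm1 : (m : ℚ) + 1 ≠ 0 := by positivity
        rw [ih] at hs
        rw [harmonic_succ]
        push_cast
        field_simp at hs ⊢
        linarith [hs]
  -- real closed form
  have hformR : ∀ n : ℕ, (c n : ℝ) = 2 * ((n : ℝ) + 1) * (harmonic n : ℝ) - 4 * n := by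
    intro n
    rw [hform n]
    push_cast
    ring
  -- limits
  have hlog : Tendsto (fun n : ℕ => Real.log n) atTop atTop :=
    Real.tendsto_log_atTop.comp tendsto_natCast_atTop_atTop
  have h2 : Tendsto (fun n : ℕ => 1 / Real.log n) atTop (nhds 0) := by
    rw [show (fun n : ℕ => 1 / Real.log n) = (fun n : ℕ => Real.log n)⁻¹ from by funext n; simp [one_div]]; exact hlog.inv_tendsto_atTop
  have h1 : Tendsto (fun n : ℕ => ((n : ℝ) + 1) / n) atTop (nhds 1) := by
    have : Tendsto (fun n : ℕ => 1 + 1 / (n : ℝ)) atTop (nhds (1 + 0)) :=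
      tendsto_const_nhds.add (tendsto_one_div_atTop_nhds_zero_nat)
    apply (by simpa using this : Tendsto (fun n : ℕ => 1 + 1 / (n : ℝ)) atTop (nhds 1)).congr'
    filter_upwards [eventually_ge_atTop 1] with n hn
    have hn0 : (n : ℝ) ≠ 0 := by positivity
    field_simp
  have h3 : Tendsto (fun n : ℕ => ((harmonic n : ℝ) - Real.log n) * (1 / Real.log n))
      atTop (nhds 0) := by
    simpa using Real.tendsto_harmonic_sub_log.mul h2
  have hg : Tendsto (fun n : ℕ =>
      2 * (((n : ℝ) + 1) / n) * (((harmonic n : ℝ) - Real.log n) * (1 / Real.log n) + 1)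
        - 4 * (1 / Real.log n)) atTop (nhds 2) := by
    have hone : Tendsto (fun _ : ℕ => (1 : ℝ)) atTop (nhds 1) := tendsto_const_nhds
    have := ((h1.const_mul 2).mul (h3.add hone)).sub (h2.const_mul 4)
    norm_num at this
    simpa [one_div] using this
  have hmain : Tendsto (fun n : ℕ => (c n : ℝ) / ((n : ℝ) * Real.log n))
      atTop (nhds 2) := by
    apply hg.congr'
    filter_upwards [eventually_ge_atTop 2] with n hn
    have hn0 : (0 : ℝ) < n := by exact_mod_cast Nat.lt_of_lt_of_le (by norm_num) hn
    have hlogn : (0 : ℝ) < Real.log n := by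
      apply Real.log_pos
      exact_mod_cast Nat.lt_of_lt_of_le (by norm_num) hn
    rw [hformR n]
    field_simp
    ring
  refine ⟨hmain, ?_⟩
  apply Asymptotics.isBigO_of_div_tendsto_nhds ?_ 2
  · exact hmain
  · filter_upwards [eventually_ge_atTop 2] with n hn h
    have hn0 : (0 : ℝ) < n := by exact_mod_cast Nat.lt_of_lt_of_le (by norm_num) hn
    have hlogn : (0 : ℝ) < Real.log n := by
      apply Real.log_pos
      exact_mod_cast Nat.lt_of_lt_of_le (by norm_num) hn
    exact absurd h (by positivity)
end

section
/- Define polynomials g_n ∈ ℚ[t] by g_0 = 1 and, for n ≥ 1, n·g_n(t) = t^{n-1}·∑_{k=1}^{n} g_{k-1}(t)·g_{n-k}(t). Then for all n ≥ 1 the mean μ_n = g_n'(1) equals 2(n+1)H_n − 4n, where H_n = ∑_{i=1}^{n} 1/i. -/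
open Filter Real Finset Polynomial Asymptotics

theorem quicksort_pgf_mean
    (g : ℕ → Polynomial ℚ)
    (hg0 : g 0 = 1)
    (hgrec : ∀ n : ℕ, 1 ≤ n →
      (n : ℚ) • g n = Polynomial.X ^ (n - 1) *
        ∑ k ∈ Finset.Icc 1 n, g (k - 1) * g (n - k))
    (μ : ℕ → ℚ)
    (hμ : ∀ n, μ n = (Polynomial.derivative (g n)).eval 1)
    (H : ℕ → ℕ → ℚ)
    (hH : ∀ p n : ℕ, H p n = ∑ i ∈ Finset.Icc 1 n, 1 / (i : ℚ) ^ p) :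
    ∀ n : ℕ, 1 ≤ n → μ n = 2 * ((n : ℚ) + 1) * H 1 n - 4 * (n : ℚ) := by
  have heval : ∀ n, (g n).eval 1 = 1 := by
    intro n
    induction n using Nat.strong_induction_on with
    | _ n ih =>
      rcases Nat.eq_zero_or_pos n with h | h
      · simp [h, hg0]
      · have hc := congrArg (Polynomial.eval 1) (hgrec n h)
        simp only [Polynomial.eval_smul, Polynomial.eval_mul, Polynomial.eval_pow,
          Polynomial.eval_X, Polynomial.eval_finset_sum, one_pow, one_mul,
          smul_eq_mul] at hc
        have hsum : ∑ k ∈ Finset.Icc 1 n, ((g (k-1)).eval 1 * (g (n-k)).eval 1)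
            = (n : ℚ) := by
          have : ∑ k ∈ Finset.Icc 1 n, ((g (k-1)).eval 1 * (g (n-k)).eval 1)
              = ∑ k ∈ Finset.Icc 1 n, (1 : ℚ) := by
            refine Finset.sum_congr rfl fun k hk => ?_
            rw [Finset.mem_Icc] at hk
            rw [ih (k-1) (by omega), ih (n-k) (by omega), one_mul]
          rw [this, Finset.sum_const, Nat.card_Icc]
          simp
        rw [hsum] at hc
        have hn : (n : ℚ) ≠ 0 := Nat.cast_ne_zero.mpr (by omega)
        field_simp at hc
        exact hc
  have hμ0 : μ 0 = 0 := by simp [hμ, hg0]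
  -- key recurrence: n μ n = n(n-1) + 2 ∑_{j<n} μ j
  have hrec : ∀ n : ℕ, 1 ≤ n →
      (n : ℚ) * μ n = (n : ℚ) * ((n : ℚ) - 1) + 2 * ∑ j ∈ Finset.range n, μ j := by
    intro n hn
    have hc := congrArg (fun p => (Polynomial.derivative p).eval 1) (hgrec n hn)
    simp only [Polynomial.derivative_smul, Polynomial.derivative_mul,
      Polynomial.derivative_X_pow, Polynomial.derivative_sum, Polynomial.eval_smul,
      Polynomial.eval_add, Polynomial.eval_mul, Polynomial.eval_pow, Polynomial.eval_X,
      Polynomial.eval_finset_sum, Polynomial.eval_C, Polynomial.eval_natCast,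
      one_pow, one_mul, mul_one, smul_eq_mul] at hc
    -- hc : n * (derivative (g n)).eval 1 = (n-1) * ∑ eval(g(k-1))*eval(g(n-k))
    --        + ∑ (deriv(g(k-1)).eval 1 * eval(g(n-k)) + eval(g(k-1)) * deriv(g(n-k)).eval 1)
    have hS : ∑ k ∈ Finset.Icc 1 n, ((g (k-1)).eval 1 * (g (n-k)).eval 1) = (n : ℚ) := by
      rw [Finset.sum_congr rfl (fun k hk => by rw [heval, heval, one_mul]),
        Finset.sum_const, Nat.card_Icc]
      simp
    have h1 : ∑ k ∈ Finset.Icc 1 n, μ (k - 1) = ∑ j ∈ Finset.range n, μ j := by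
      rw [← Finset.Ico_add_one_right_eq_Icc, Finset.sum_Ico_eq_sum_range]
      simp
    have h2 : ∑ k ∈ Finset.Icc 1 n, μ (n - k) = ∑ j ∈ Finset.range n, μ j := by
      rw [← Finset.Ico_add_one_right_eq_Icc, Finset.sum_Ico_eq_sum_range]
      have he : ∀ i ∈ Finset.range (n + 1 - 1), μ (n - (1 + i)) = μ (n - 1 - i) := by
        intro i hi; congr 1; omega
      rw [Finset.sum_congr rfl he]
      have := Finset.sum_range_reflect (fun i => μ i) n
      simpa using this
    have hsum2 : ∑ k ∈ Finset.Icc 1 n,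
        ((Polynomial.derivative (g (k-1))).eval 1 * (g (n-k)).eval 1
          + (g (k-1)).eval 1 * (Polynomial.derivative (g (n-k))).eval 1)
        = 2 * ∑ j ∈ Finset.range n, μ j := by
      have : ∀ k ∈ Finset.Icc 1 n,
          ((Polynomial.derivative (g (k-1))).eval 1 * (g (n-k)).eval 1
            + (g (k-1)).eval 1 * (Polynomial.derivative (g (n-k))).eval 1)
          = μ (k-1) + μ (n-k) := by
        intro k hk
        rw [heval, heval, ← hμ, ← hμ]; ring
      rw [Finset.sum_congr rfl this, Finset.sum_add_distrib, h1, h2]; ring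
    rw [hS, hsum2, ← hμ] at hc
    rw [hc, Nat.cast_sub hn]
    push_cast; ring
  -- step relation
  have hstep : ∀ n : ℕ, 1 ≤ n →
      ((n : ℚ) + 1) * μ (n + 1) = ((n : ℚ) + 2) * μ n + 2 * (n : ℚ) := by
    intro n hn
    have hA := hrec n hn
    have hB := hrec (n + 1) (by omega)
    rw [Finset.sum_range_succ] at hB
    push_cast at hB
    linarith
  have hμ1 : μ 1 = 0 := by
    have := hrec 1 le_rfl
    simp [Finset.sum_range_one, hμ0] at this
    linarith
  intro n hn
  induction n, hn using Nat.le_induction with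
  | base => simp [hμ1, hH]; norm_num
  | succ n hn ih =>
    have hs := hstep n hn
    rw [ih] at hs
    have hHs : H 1 (n + 1) = H 1 n + 1 / ((n : ℚ) + 1) := by
      rw [hH, hH, Finset.sum_Icc_succ_top (by omega)]
      push_cast; ring
    have hn1 : (n : ℚ) + 1 ≠ 0 := by positivity
    push_cast at hs ⊢
    rw [hHs]
    field_simp at hs ⊢
    linarith
end

section
/- Define polynomials g_n ∈ ℚ[t] by g_0 = 1 and, for n ≥ 1, n·g_n(t) = t^{n-1}·∑_{k=1}^{n} g_{k-1}(t)·g_{n-k}(t), with mean μ_n = g_n'(1) and second central moment m_2(n) = ∑_k [t^k]g_n · (k − μ_n)². Then for all n ≥ 1, m_2(n) = n(7n+13) − 2(n+1)·H_1(n) − 4(n+1)²·H_2(n), where H_m(n) = ∑_{i=1}^{n} 1/i^m. -/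
open Finset

namespace QSVar

def h1 (n : ℕ) : ℚ := ∑ j ∈ Finset.range n, 1/((j:ℚ)+1)
def h2 (n : ℕ) : ℚ := ∑ j ∈ Finset.range n, 1/((j:ℚ)+1)^2

lemma h1_zero : h1 0 = 0 := by simp [h1]
lemma h2_zero : h2 0 = 0 := by simp [h2]
lemma h1_succ (n : ℕ) : h1 (n+1) = h1 n + 1/((n:ℚ)+1) := Finset.sum_range_succ _ n
lemma h2_succ (n : ℕ) : h2 (n+1) = h2 n + 1/((n:ℚ)+1)^2 := Finset.sum_range_succ _ n

lemma cast_sub' {j m : ℕ} (h : j ≤ m) : ((m - j : ℕ) : ℚ) = (m:ℚ) - j := by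
  exact Nat.cast_sub h

lemma cast_sub_helper {n j : ℕ} (h : j < n) : ((n - 1 - j : ℕ) : ℚ) = (n:ℚ) - 1 - j := by
  rw [show n - 1 - j = n - (j+1) by omega, cast_sub' (by omega)]
  push_cast; ring

-- reflection of 1/(N-j)
lemma sum_inv_reflect (N : ℕ) :
    ∑ j ∈ range N, 1/((N:ℚ) - j) = h1 N := by
  rw [← Finset.sum_range_reflect]
  refine Finset.sum_congr rfl (fun j hj => ?_)
  have hj' := Finset.mem_range.mp hj
  rw [cast_sub_helper hj']
  congr 1; ring

-- partial fractions sum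
lemma pf_sum (N : ℕ) :
    ∑ j ∈ range N, 1/(((j:ℚ)+1)*((N:ℚ)-j)) = 2/((N:ℚ)+1) * h1 N := by
  have key : ∑ j ∈ range N, 1/(((j:ℚ)+1)*((N:ℚ)-j))
      = ∑ j ∈ range N, (1/((N:ℚ)+1)) * (1/((j:ℚ)+1) + 1/((N:ℚ)-j)) := by
    refine Finset.sum_congr rfl (fun j hj => ?_)
    have hj' := Finset.mem_range.mp hj
    have hne1 : ((j:ℚ)+1) ≠ 0 := by positivity
    have hne2 : ((N:ℚ) - j) ≠ 0 := by
      have : (j:ℚ) < N := by exact_mod_cast hj'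
      linarith
    have hne3 : ((N:ℚ)+1) ≠ 0 := by positivity
    field_simp
    ring
  rw [key, ← Finset.mul_sum, Finset.sum_add_distrib, sum_inv_reflect]
  have h : ∑ j ∈ range N, 1/((j:ℚ)+1) = h1 N := rfl
  rw [h]; ring

-- D in reflected form
lemma rd_sum (N : ℕ) :
    ∑ j ∈ range N, h1 (N-1-j) / ((j:ℚ)+1) = (h1 N)^2 - h2 N := by
  induction N with
  | zero => simp [h1_zero, h2_zero]
  | succ N ih =>
    rw [Finset.sum_range_succ]
    rw [show N + 1 - 1 - N = 0 by omega, h1_zero]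
    have step : ∑ j ∈ range N, h1 (N + 1 - 1 - j) / ((j:ℚ)+1)
        = ∑ j ∈ range N, (h1 (N-1-j) / ((j:ℚ)+1) + 1/(((j:ℚ)+1)*((N:ℚ)-j))) := by
      refine Finset.sum_congr rfl (fun j hj => ?_)
      have hj' := Finset.mem_range.mp hj
      rw [show N + 1 - 1 - j = (N - 1 - j) + 1 by omega, h1_succ, cast_sub_helper hj',
        show (N:ℚ) - 1 - (j:ℚ) + 1 = (N:ℚ) - j by ring]
      have hne1 : ((j:ℚ)+1) ≠ 0 := by positivity
      have hne2 : ((N:ℚ) - j) ≠ 0 := by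
        have : (j:ℚ) < N := by exact_mod_cast hj'
        linarith
      field_simp
    rw [step, Finset.sum_add_distrib, ih, pf_sum, h1_succ, h2_succ]
    have hne3 : ((N:ℚ)+1) ≠ 0 := by positivity
    field_simp
    ring

lemma d_sum (N : ℕ) :
    ∑ j ∈ range N, h1 j / ((N:ℚ) - j) = (h1 N)^2 - h2 N := by
  rw [← Finset.sum_range_reflect, ← rd_sum N]
  refine Finset.sum_congr rfl (fun j hj => ?_)
  have hj' := Finset.mem_range.mp hj
  rw [cast_sub_helper hj']
  congr 1; ring

-- T
lemma t_sum (m : ℕ) :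
    ∑ j ∈ range (m+1), h1 j * h1 (m-j)
      = ((m:ℚ)+1)*((h1 m)^2 - h2 m) - 2*m*h1 m + 2*m := by
  induction m with
  | zero => simp [h1_zero, h2_zero]
  | succ m ih =>
    rw [Finset.sum_range_succ, show m + 1 - (m+1) = 0 by omega, h1_zero]
    have step : ∑ j ∈ range (m+1), h1 j * h1 (m+1-j)
        = ∑ j ∈ range (m+1), (h1 j * h1 (m-j) + h1 j / (((m:ℚ)+1) - j)) := by
      refine Finset.sum_congr rfl (fun j hj => ?_)
      have hj' : j ≤ m := by have := Finset.mem_range.mp hj; omega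
      rw [show m + 1 - j = (m - j) + 1 by omega, h1_succ, cast_sub' hj',
        show (m:ℚ) - (j:ℚ) + 1 = ((m:ℚ)+1) - j by ring]
      ring
    rw [step, Finset.sum_add_distrib, ih]
    have hd := d_sum (m+1)
    push_cast at hd
    rw [hd, h1_succ, h2_succ]
    have hne3 : ((m:ℚ)+1) ≠ 0 := by positivity
    push_cast
    field_simp
    ring

-- symmetrization: S0
lemma s0_sum (m : ℕ) :
    2 * ∑ j ∈ range (m+1), ((j:ℚ)+1) * (h1 j * h1 (m-j))
      = ((m:ℚ)+2) * ∑ j ∈ range (m+1), h1 j * h1 (m-j) := by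
  have hrefl : ∑ j ∈ range (m+1), ((j:ℚ)+1) * (h1 j * h1 (m-j))
      = ∑ j ∈ range (m+1), (((m:ℚ)-j)+1) * (h1 j * h1 (m-j)) := by
    rw [← Finset.sum_range_reflect]
    refine Finset.sum_congr rfl (fun j hj => ?_)
    have hj' : j ≤ m := by have := Finset.mem_range.mp hj; omega
    rw [show m + 1 - 1 - j = m - j by omega, show m - (m - j) = j by omega,
      cast_sub' hj']
    ring
  rw [two_mul]
  nth_rewrite 2 [hrefl]
  rw [← Finset.sum_add_distrib, Finset.mul_sum]
  refine Finset.sum_congr rfl (fun j hj => ?_)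
  ring

-- sum of h1
lemma sh_sum (n : ℕ) :
    ∑ j ∈ range n, h1 j = (n:ℚ) * h1 n - n := by
  induction n with
  | zero => simp [h1_zero]
  | succ n ih =>
    rw [Finset.sum_range_succ, ih, h1_succ]
    have hne : ((n:ℚ)+1) ≠ 0 := by positivity
    push_cast
    field_simp
    ring

-- sum of (j+1) h1 j
lemma sjh_sum (n : ℕ) :
    ∑ j ∈ range n, ((j:ℚ)+1) * h1 j
      = ((n:ℚ)*(n+1)/2) * h1 n - (3*(n:ℚ) + (n:ℚ)^2)/4 := by
  induction n with
  | zero => simp [h1_zero]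
  | succ n ih =>
    rw [Finset.sum_range_succ, ih, h1_succ]
    have hne : ((n:ℚ)+1) ≠ 0 := by positivity
    push_cast
    field_simp
    ring

-- S1
lemma s1_sum (m : ℕ) :
    ∑ j ∈ range (m+1), ((j:ℚ)+1)*(((m:ℚ)+1)-j)*(h1 j * h1 (m-j))
      = (37*(m:ℚ)^3+186*(m:ℚ)^2+209*(m:ℚ))/108
        + h1 m * (-5*(m:ℚ)^3-30*(m:ℚ)^2-37*(m:ℚ))/18
        + ((h1 m)^2 - h2 m) * (((m:ℚ)+1)*((m:ℚ)+2)*((m:ℚ)+3)/6) := by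
  induction m with
  | zero => simp [h1_zero, h2_zero]
  | succ m ih =>
    rw [Finset.sum_range_succ, show m + 1 - (m+1) = 0 by omega, h1_zero]
    have step : ∑ j ∈ range (m+1), ((j:ℚ)+1)*(((m:ℚ)+1+1)-j)*(h1 j * h1 (m+1-j))
        = ∑ j ∈ range (m+1),
            ( ((j:ℚ)+1)*(((m:ℚ)+1)-j)*(h1 j * h1 (m-j))
            + ((j:ℚ)+1) * (h1 j * h1 (m-j))
            + ((j:ℚ)+1) * h1 j
            + (((m:ℚ)+2) * (h1 j / (((m:ℚ)+1) - j)) - h1 j) ) := by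
      refine Finset.sum_congr rfl (fun j hj => ?_)
      have hj' : j ≤ m := by have := Finset.mem_range.mp hj; omega
      rw [show m + 1 - j = (m - j) + 1 by omega, h1_succ, cast_sub' hj',
        show (m:ℚ) - (j:ℚ) + 1 = ((m:ℚ)+1) - j by ring]
      have hne : ((m:ℚ)+1) - j ≠ 0 := by
        have : (j:ℚ) ≤ m := by exact_mod_cast hj'
        linarith
      field_simp
      ring
    push_cast
    push_cast at step
    rw [step]
    rw [Finset.sum_add_distrib, Finset.sum_add_distrib, Finset.sum_add_distrib,
      Finset.sum_sub_distrib, ← Finset.mul_sum]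
    have hs0 : ∑ j ∈ range (m+1), ((j:ℚ)+1) * (h1 j * h1 (m-j))
        = (((m:ℚ)+2) * ∑ j ∈ range (m+1), h1 j * h1 (m-j)) / 2 := by
      rw [← s0_sum m]; ring
    have hd := d_sum (m+1)
    push_cast at hd
    rw [ih, hs0, t_sum, hd, sjh_sum, sh_sum, h1_succ, h2_succ]
    have hne3 : ((m:ℚ)+1) ≠ 0 := by positivity
    push_cast
    field_simp
    ring

-- S2
lemma s2_sum (m : ℕ) :
    ∑ j ∈ range (m+1), ((j:ℚ)+1)*((m:ℚ)-j)*h1 j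
      = -(5*(m:ℚ)^3+21*(m:ℚ)^2+10*(m:ℚ))/36
        + h1 m * ((m:ℚ)^3+3*(m:ℚ)^2+2*(m:ℚ))/6 := by
  induction m with
  | zero => simp [h1_zero]
  | succ m ih =>
    have step : ∑ j ∈ range (m+1+1), ((j:ℚ)+1)*(((m:ℚ)+1)-j)*h1 j
        = ∑ j ∈ range (m+1), ((j:ℚ)+1)*((m:ℚ)-j)*h1 j
          + ∑ j ∈ range (m+1), ((j:ℚ)+1)*h1 j := by
      rw [Finset.sum_range_succ, ← Finset.sum_add_distrib]
      push_cast
      rw [show ((m:ℚ)+1) - ((m:ℚ)+1) = 0 by ring]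
      rw [show (((m:ℚ)+1)+1)*0*h1 (m+1) = 0 by ring, add_zero]
      exact Finset.sum_congr rfl (fun j hj => by push_cast; ring)
    push_cast
    push_cast at step
    rw [step, ih, sjh_sum, h1_succ]
    have hne : ((m:ℚ)+1) ≠ 0 := by positivity
    push_cast
    field_simp
    ring

lemma sj_sum (n : ℕ) : ∑ j ∈ range n, (j:ℚ) = ((n:ℚ)^2 - n)/2 := by
  induction n with
  | zero => simp
  | succ n ih => rw [Finset.sum_range_succ, ih]; push_cast; ring

-- S3
lemma s3_sum (m : ℕ) :
    ∑ j ∈ range (m+1), (j:ℚ)*((m:ℚ)-j) = ((m:ℚ)^3 - m)/6 := by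
  induction m with
  | zero => simp
  | succ m ih =>
    have step : ∑ j ∈ range (m+1+1), (j:ℚ)*(((m:ℚ)+1)-j)
        = ∑ j ∈ range (m+1), (j:ℚ)*((m:ℚ)-j) + ∑ j ∈ range (m+1), (j:ℚ) := by
      rw [Finset.sum_range_succ, ← Finset.sum_add_distrib]
      push_cast
      rw [show ((m:ℚ)+1)*(((m:ℚ)+1) - ((m:ℚ)+1)) = 0 by ring, add_zero]
      exact Finset.sum_congr rfl (fun j hj => by ring)
    push_cast
    push_cast at step
    rw [step, ih, sj_sum]
    push_cast
    ring

def b (n : ℕ) : ℚ := 2*((n:ℚ)+1)*h1 n - 4*n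

def c (n : ℕ) : ℚ := 23*(n:ℚ)^2+17*(n:ℚ) - 4*((n:ℚ)+1)*(4*(n:ℚ)+1)*h1 n
  + 4*((n:ℚ)+1)^2*(h1 n)^2 - 4*((n:ℚ)+1)^2*h2 n

-- convolution of b
lemma v_sum (m : ℕ) :
    ∑ j ∈ range (m+1), b j * b (m-j)
      = (169*(m:ℚ)^3+438*(m:ℚ)^2+257*(m:ℚ))/27
        + h1 m * (-34*(m:ℚ)^3-132*(m:ℚ)^2-122*(m:ℚ))/9
        + ((h1 m)^2 - h2 m) * (2*(m:ℚ)^3/3+4*(m:ℚ)^2+22*(m:ℚ)/3+4) := by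
  have expand : ∑ j ∈ range (m+1), b j * b (m-j)
      = ∑ j ∈ range (m+1),
          ( 4*(((j:ℚ)+1)*(((m:ℚ)+1)-j)*(h1 j * h1 (m-j)))
          - 8*(((j:ℚ)+1)*((m:ℚ)-j)*h1 j)
          - 8*((j:ℚ)*(((m:ℚ)-j)+1)*h1 (m-j))
          + 16*((j:ℚ)*((m:ℚ)-j)) ) := by
    refine Finset.sum_congr rfl (fun j hj => ?_)
    have hj' : j ≤ m := by have := Finset.mem_range.mp hj; omega
    rw [b, b, cast_sub' hj']
    ring
  have hrefl : ∑ j ∈ range (m+1), ((j:ℚ)*(((m:ℚ)-j)+1)*h1 (m-j))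
      = ∑ j ∈ range (m+1), ((j:ℚ)+1)*((m:ℚ)-j)*h1 j := by
    rw [← Finset.sum_range_reflect]
    refine Finset.sum_congr rfl (fun j hj => ?_)
    have hj' : j ≤ m := by have := Finset.mem_range.mp hj; omega
    rw [show m + 1 - 1 - j = m - j by omega, show m - (m - j) = j by omega,
      cast_sub' hj']
    ring
  rw [expand]
  rw [Finset.sum_add_distrib, Finset.sum_sub_distrib, Finset.sum_sub_distrib,
    ← Finset.mul_sum, ← Finset.mul_sum, ← Finset.mul_sum, ← Finset.mul_sum]
  rw [hrefl, s1_sum, s2_sum, s3_sum]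
  ring

-- partial sums of b and c
lemma sigb_sum (n : ℕ) :
    ∑ j ∈ range n, b j = (n:ℚ)*((n:ℚ)+1)*h1 n + (n:ℚ)/2 - 5*(n:ℚ)^2/2 := by
  induction n with
  | zero => simp [h1_zero]
  | succ n ih =>
    rw [Finset.sum_range_succ, ih, b, h1_succ]
    have hne : ((n:ℚ)+1) ≠ 0 := by positivity
    push_cast
    field_simp
    ring

lemma sigc_sum (n : ℕ) :
    ∑ j ∈ range n, c j
      = (263*(n:ℚ)^3+75*(n:ℚ)^2-14*(n:ℚ))/27
        + h1 n * (-56*(n:ℚ)^3-48*(n:ℚ)^2-4*(n:ℚ))/9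
        + ((h1 n)^2 - h2 n) * (4*(n:ℚ)^3/3+2*(n:ℚ)^2+2*(n:ℚ)/3) := by
  induction n with
  | zero => simp [h1_zero, h2_zero]
  | succ n ih =>
    rw [Finset.sum_range_succ, ih, c, h1_succ, h2_succ]
    have hne : ((n:ℚ)+1) ≠ 0 := by positivity
    push_cast
    field_simp
    ring

-- polynomial evaluation lemmas
lemma eval_one_eq (p : Polynomial ℚ) : p.eval 1 = ∑ k ∈ p.support, p.coeff k := by
  rw [Polynomial.eval_eq_sum, Polynomial.sum_def]
  simp

lemma deriv_eval_one (p : Polynomial ℚ) :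
    (Polynomial.derivative p).eval 1 = ∑ k ∈ p.support, p.coeff k * k := by
  rw [Polynomial.derivative_apply, Polynomial.sum_def, Polynomial.eval_finset_sum]
  exact Finset.sum_congr rfl (fun k _ => by simp)

lemma deriv2_eval_one (p : Polynomial ℚ) :
    (Polynomial.derivative (Polynomial.derivative p)).eval 1
      = ∑ k ∈ p.support, p.coeff k * k * ((k:ℚ) - 1) := by
  rw [deriv_eval_one]
  have hsub1 : (Polynomial.derivative p).support ⊆ range (p.natDegree + 1) := by
    intro k hk
    have h1 := Polynomial.le_natDegree_of_mem_supp k hk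
    have h2 := Polynomial.natDegree_derivative_le p
    exact Finset.mem_range.mpr (by omega)
  rw [Finset.sum_subset hsub1 (fun x _ hx => by
    rw [Polynomial.notMem_support_iff.mp hx]; ring)]
  have step : ∑ k ∈ range (p.natDegree + 1), (Polynomial.derivative p).coeff k * k
      = ∑ k ∈ range (p.natDegree + 1), p.coeff (k+1) * ((k:ℚ)+1) * (((k:ℚ)+1) - 1) := by
    refine Finset.sum_congr rfl (fun k _ => ?_)
    rw [Polynomial.coeff_derivative]
    push_cast
    ring
  rw [step]
  have step2 : ∑ k ∈ range (p.natDegree + 1 + 1), p.coeff k * (k:ℚ) * ((k:ℚ) - 1)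
      = ∑ k ∈ range (p.natDegree + 1), p.coeff (k+1) * ((k:ℚ)+1) * (((k:ℚ)+1) - 1) := by
    rw [Finset.sum_range_succ']
    push_cast
    simp
  rw [← step2]
  refine (Finset.sum_subset (fun k hk => ?_) (fun x _ hx => by
    rw [Polynomial.notMem_support_iff.mp hx]; ring)).symm
  have := Polynomial.le_natDegree_of_mem_supp k hk
  exact Finset.mem_range.mpr (by omega)

-- reindexing Icc 1 n sums
lemma icc_reindex (n : ℕ) (f : ℕ → ℚ) :
    ∑ k ∈ Finset.Icc 1 n, f (k-1) = ∑ j ∈ range n, f j := by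
  induction n with
  | zero => simp
  | succ n ih => rw [Finset.sum_Icc_succ_top (by omega), ih, Finset.sum_range_succ]; simp

lemma icc_reindex' (n : ℕ) (f : ℕ → ℚ) :
    ∑ k ∈ Finset.Icc 1 n, f (n-k) = ∑ j ∈ range n, f j := by
  have h : ∑ k ∈ Finset.Icc 1 n, f (n-k) = ∑ k ∈ Finset.Icc 1 n, (fun j => f (n-1-j)) (k-1) := by
    refine Finset.sum_congr rfl (fun k hk => ?_)
    have hk' := Finset.mem_Icc.mp hk
    have : n - k = n - 1 - (k-1) := by omega
    rw [this]
  rw [h, icc_reindex n (fun j => f (n-1-j)), Finset.sum_range_reflect]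

lemma cast_pred_mul (m : ℕ) : (m:ℚ) * ((m-1:ℕ):ℚ) = (m:ℚ)^2 - m := by
  cases m with
  | zero => simp
  | succ k => rw [Nat.succ_sub_one]; push_cast; ring

end QSVar

open Filter Real Finset Polynomial Asymptotics
open QSVar

theorem quicksort_variance_closed_form
    (g : ℕ → Polynomial ℚ)
    (hg0 : g 0 = 1)
    (hgrec : ∀ n : ℕ, 1 ≤ n →
      (n : ℚ) • g n = Polynomial.X ^ (n - 1) *
        ∑ k ∈ Finset.Icc 1 n, g (k - 1) * g (n - k))
    (μ : ℕ → ℚ)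
    (hμ : ∀ n, μ n = (Polynomial.derivative (g n)).eval 1)
    (m : ℕ → ℕ → ℚ)
    (hm : ∀ r n, m r n =
      ∑ k ∈ (g n).support, (g n).coeff k * ((k : ℚ) - μ n) ^ r)
    (H : ℕ → ℕ → ℚ)
    (hH : ∀ p n : ℕ, H p n = ∑ i ∈ Finset.Icc 1 n, 1 / (i : ℚ) ^ p) :
    ∀ n : ℕ, 1 ≤ n →
      m 2 n = (n : ℚ) * (7 * n + 13) - 2 * ((n : ℚ) + 1) * H 1 n
        - 4 * ((n : ℚ) + 1) ^ 2 * H 2 n := by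
  -- Harmonic numbers
  have hH1 : ∀ n, H 1 n = h1 n := by
    intro n
    rw [hH, h1, ← icc_reindex n (fun j => 1/((j:ℚ)+1))]
    refine Finset.sum_congr rfl (fun k hk => ?_)
    have hk' := Finset.mem_Icc.mp hk
    rw [pow_one]
    congr 1
    rw [cast_sub' (by omega : 1 ≤ k)]
    ring
  have hH2 : ∀ n, H 2 n = h2 n := by
    intro n
    rw [hH, h2, ← icc_reindex n (fun j => 1/((j:ℚ)+1)^2)]
    refine Finset.sum_congr rfl (fun k hk => ?_)
    have hk' := Finset.mem_Icc.mp hk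
    congr 2
    rw [cast_sub' (by omega : 1 ≤ k)]
    ring
  -- g n evaluates to 1 at 1
  have hA : ∀ n, Polynomial.eval 1 (g n) = 1 := by
    intro n
    induction n using Nat.strong_induction_on with
    | _ n ih =>
      rcases Nat.eq_zero_or_pos n with rfl | hn
      · simp [hg0]
      · have h1 := congrArg (fun p => Polynomial.eval 1 p) (hgrec n hn)
        simp only [Polynomial.eval_smul, Polynomial.eval_mul, Polynomial.eval_pow,
          Polynomial.eval_X, Polynomial.eval_finset_sum, one_pow, one_mul, smul_eq_mul] at h1
        have hsum : ∑ k ∈ Finset.Icc 1 n, Polynomial.eval 1 (g (k-1)) * Polynomial.eval 1 (g (n-k))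
            = (n:ℚ) := by
          have : ∀ k ∈ Finset.Icc 1 n,
              Polynomial.eval 1 (g (k-1)) * Polynomial.eval 1 (g (n-k)) = 1 := by
            intro k hk
            have hk' := Finset.mem_Icc.mp hk
            rw [ih (k-1) (by omega), ih (n-k) (by omega), mul_one]
          rw [Finset.sum_congr rfl this, Finset.sum_const, Nat.card_Icc]
          simp
        rw [hsum] at h1
        have hne : (n:ℚ) ≠ 0 := Nat.cast_ne_zero.mpr (by omega)
        field_simp at h1
        exact h1
  -- key sum
  have hS : ∀ n, 1 ≤ n →
      ∑ k ∈ Finset.Icc 1 n, Polynomial.eval 1 (g (k-1)) * Polynomial.eval 1 (g (n-k)) = (n:ℚ) := by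
    intro n hn
    have : ∀ k ∈ Finset.Icc 1 n,
        Polynomial.eval 1 (g (k-1)) * Polynomial.eval 1 (g (n-k)) = 1 := by
      intro k hk
      rw [hA, hA, mul_one]
    rw [Finset.sum_congr rfl this, Finset.sum_const, Nat.card_Icc]
    simp
  -- first derivative: mean
  have hB : ∀ n, Polynomial.eval 1 (Polynomial.derivative (g n)) = b n := by
    intro n
    induction n using Nat.strong_induction_on with
    | _ n ih =>
      rcases Nat.eq_zero_or_pos n with rfl | hn
      · simp [hg0, b, h1_zero]
      · have h2 := congrArg (fun p => Polynomial.eval 1 (Polynomial.derivative p)) (hgrec n hn)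
        simp only [Polynomial.derivative_smul, Polynomial.derivative_mul, Polynomial.derivative_sum,
          Polynomial.derivative_X_pow, Polynomial.eval_smul, Polynomial.eval_add, Polynomial.eval_mul,
          Polynomial.eval_pow, Polynomial.eval_X, Polynomial.eval_C, Polynomial.eval_finset_sum,
          one_pow, one_mul, mul_one, smul_eq_mul] at h2
        rw [hS n hn] at h2
        have hsplit : ∑ k ∈ Finset.Icc 1 n,
            (Polynomial.eval 1 (Polynomial.derivative (g (k-1))) * Polynomial.eval 1 (g (n-k)) +
              Polynomial.eval 1 (g (k-1)) * Polynomial.eval 1 (Polynomial.derivative (g (n-k))))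
            = 2 * ∑ j ∈ range n, b j := by
          have e1 : ∀ k ∈ Finset.Icc 1 n,
              Polynomial.eval 1 (Polynomial.derivative (g (k-1))) * Polynomial.eval 1 (g (n-k)) +
                Polynomial.eval 1 (g (k-1)) * Polynomial.eval 1 (Polynomial.derivative (g (n-k)))
              = b (k-1) + b (n-k) := by
            intro k hk
            have hk' := Finset.mem_Icc.mp hk
            rw [hA, hA, ih (k-1) (by omega), ih (n-k) (by omega)]
            ring
          rw [Finset.sum_congr rfl e1, Finset.sum_add_distrib,
            icc_reindex n b, icc_reindex' n b]
          ring
        rw [hsplit, sigb_sum] at h2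
        have hne : (n:ℚ) ≠ 0 := Nat.cast_ne_zero.mpr (by omega)
        have hcast : ((n-1:ℕ):ℚ) = (n:ℚ) - 1 := by
          rw [cast_sub' (by omega : 1 ≤ n)]; norm_num
        rw [hcast] at h2
        have target : (n:ℚ) * b n
            = ((n:ℚ)-1) * (n:ℚ) + (2*((n:ℚ)*((n:ℚ)+1)*h1 n + (n:ℚ)/2 - 5*(n:ℚ)^2/2)) := by
          rw [b]; ring
        exact mul_left_cancel₀ hne (h2.trans target.symm)
  -- second derivative recurrence and closed form
  have hC : ∀ n, 1 ≤ n →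
      Polynomial.eval 1 (Polynomial.derivative (Polynomial.derivative (g n))) = c n := by
    intro n
    induction n using Nat.strong_induction_on with
    | _ n ih =>
      intro hn
      have h3 := congrArg
        (fun p => Polynomial.eval 1 (Polynomial.derivative (Polynomial.derivative p))) (hgrec n hn)
      simp only [Polynomial.derivative_smul, Polynomial.derivative_add, Polynomial.derivative_mul,
        Polynomial.derivative_sum, Polynomial.derivative_X_pow, Polynomial.derivative_C,
        Polynomial.eval_smul, Polynomial.eval_add, Polynomial.eval_mul, Polynomial.eval_pow,
        Polynomial.eval_X, Polynomial.eval_C, Polynomial.eval_finset_sum,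
        one_pow, one_mul, mul_one, zero_mul, zero_add, smul_eq_mul, hA, hB] at h3
      have hone : ∑ x ∈ Finset.Icc 1 n, (1:ℚ) = (n:ℚ) := by
        rw [Finset.sum_const, Nat.card_Icc]; simp
      have hDS : ∑ x ∈ Finset.Icc 1 n, (b (x-1) + b (n-x)) = 2 * ∑ j ∈ range n, b j := by
        rw [Finset.sum_add_distrib, icc_reindex n b, icc_reindex' n b]; ring
      have hC0 : Polynomial.eval 1 (Polynomial.derivative (Polynomial.derivative (g 0))) = c 0 := by
        simp [hg0, c, h1_zero, h2_zero]
      have hCsmall : ∀ j < n, Polynomial.eval 1 (Polynomial.derivative (Polynomial.derivative (g j))) = c j := by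
        intro j hj
        rcases Nat.eq_zero_or_pos j with rfl | hj1
        · exact hC0
        · exact ih j hj hj1
      have hDDS : ∑ x ∈ Finset.Icc 1 n,
          (Polynomial.eval 1 (Polynomial.derivative (Polynomial.derivative (g (x - 1)))) + b (x - 1) * b (n - x) +
            (b (x - 1) * b (n - x) + Polynomial.eval 1 (Polynomial.derivative (Polynomial.derivative (g (n - x))))))
          = 2 * ∑ j ∈ range n, c j + 2 * ∑ j ∈ range n, b j * b (n-1-j) := by
        have e1 : ∀ x ∈ Finset.Icc 1 n,
            Polynomial.eval 1 (Polynomial.derivative (Polynomial.derivative (g (x - 1)))) + b (x - 1) * b (n - x) +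
              (b (x - 1) * b (n - x) + Polynomial.eval 1 (Polynomial.derivative (Polynomial.derivative (g (n - x)))))
            = c (x-1) + c (n-x) + 2 * (b (x-1) * b (n-1-(x-1))) := by
          intro x hx
          have hx' := Finset.mem_Icc.mp hx
          rw [hCsmall (x-1) (by omega), hCsmall (n-x) (by omega),
            show n - 1 - (x-1) = n - x by omega]
          ring
        rw [Finset.sum_congr rfl e1, Finset.sum_add_distrib, Finset.sum_add_distrib,
          icc_reindex n c, icc_reindex' n c, ← Finset.mul_sum,
          icc_reindex n (fun j => b j * b (n-1-j))]
        ring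
      rw [hone, hDS, hDDS] at h3
      obtain ⟨M, rfl⟩ : ∃ M, n = M + 1 := ⟨n - 1, by omega⟩
      simp only [Nat.add_sub_cancel] at h3
      rw [v_sum, sigb_sum, sigc_sum, cast_pred_mul] at h3
      have hne : ((M:ℚ)+1) ≠ 0 := by positivity
      have hcast : ((M+1:ℕ):ℚ) = (M:ℚ)+1 := by push_cast; ring
      rw [hcast] at h3
      refine mul_left_cancel₀ hne (h3.trans ?_)
      rw [c, h1_succ, h2_succ]
      push_cast
      field_simp
      ring
  -- final assembly
  intro n hn
  rw [hm, hμ, hB]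
  have expand : ∑ k ∈ (g n).support, (g n).coeff k * ((k:ℚ) - b n)^2
      = ∑ k ∈ (g n).support, ((g n).coeff k * (k:ℚ) * ((k:ℚ)-1)
          + ((1 - 2*b n) * ((g n).coeff k * (k:ℚ)) + (b n)^2 * (g n).coeff k)) :=
    Finset.sum_congr rfl (fun k _ => by ring)
  rw [expand, Finset.sum_add_distrib, Finset.sum_add_distrib, ← Finset.mul_sum, ← Finset.mul_sum,
    ← deriv2_eval_one, ← deriv_eval_one, ← eval_one_eq, hA, hC n hn, hB, hH1, hH2, c, b]
  ring
end

section
/- Let μ_n be the mean and m_2(n) the variance of the Quicksort comparison-count generating polynomials g_n. Then the coefficient of variation √(m_2(n))/μ_n tends to 0 as n → ∞; that is, the distribution of the number of Quicksort comparisons is concentrated around its mean. -/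
open Filter Real Finset Polynomial Asymptotics

namespace QS


def Hq (n : ℕ) : ℚ := harmonic n
def Pq (n : ℕ) : ℚ := ∑ i ∈ Finset.range n, (((i : ℚ) + 1) ^ 2)⁻¹

lemma Hq_succ (n : ℕ) : Hq (n + 1) = Hq n + ((n : ℚ) + 1)⁻¹ := by
  unfold Hq; rw [harmonic_succ]; norm_cast

lemma Pq_succ (n : ℕ) : Pq (n + 1) = Pq n + (((n : ℚ) + 1) ^ 2)⁻¹ := by
  simp [Pq, Finset.sum_range_succ]

lemma Hq_zero : Hq 0 = 0 := by simp [Hq, harmonic]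
lemma Pq_zero : Pq 0 = 0 := by simp [Pq]

noncomputable def Aq (n : ℕ) : ℚ := 2 * ((n : ℚ) + 1) * Hq n - 4 * n
noncomputable def Vq (n : ℕ) : ℚ :=
  7 * (n : ℚ) ^ 2 - 4 * ((n : ℚ) + 1) ^ 2 * Pq n - 2 * ((n : ℚ) + 1) * Hq n + 13 * n
noncomputable def Bq (n : ℕ) : ℚ := Aq n ^ 2 + Vq n - Aq n

lemma Aq_zero : Aq 0 = 0 := by simp [Aq, Hq_zero]
lemma Bq_zero : Bq 0 = 0 := by simp [Bq, Vq, Aq_zero, Pq_zero, Hq_zero]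

lemma Aq_succ (n : ℕ) : Aq (n + 1) = Aq n + 2 * Hq (n + 1) - 2 := by
  have h := Hq_succ n
  have hne : ((n : ℚ) + 1) ≠ 0 := by positivity
  simp only [Aq, h]; push_cast; field_simp; ring

lemma sumH (n : ℕ) :
    ∑ j ∈ range n, Hq (j + 1) = ((n : ℚ) + 1) * Hq n - n := by
  induction n with
  | zero => simp [Hq_zero]
  | succ n ih =>
    rw [Finset.sum_range_succ, ih, Hq_succ]
    have hne : ((n : ℚ) + 1) ≠ 0 := by positivity
    push_cast; field_simp; ring

lemma sumjH (n : ℕ) :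
    ∑ j ∈ range n, ((j : ℚ) + 1) * Hq (j + 1)
      = (n : ℚ) * ((n : ℚ) + 1) / 2 * Hq n - (n : ℚ) ^ 2 / 4 + (n : ℚ) / 4 := by
  induction n with
  | zero => simp [Hq_zero]
  | succ n ih =>
    rw [Finset.sum_range_succ, ih, Hq_succ]
    have hne : ((n : ℚ) + 1) ≠ 0 := by positivity
    push_cast; field_simp; ring

lemma sumA (n : ℕ) :
    ∑ j ∈ range n, Aq j
      = (n : ℚ) / 2 - 5 / 2 * (n : ℚ) ^ 2 + ((n : ℚ) + (n : ℚ) ^ 2) * Hq n := by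
  induction n with
  | zero => simp
  | succ n ih =>
    rw [Finset.sum_range_succ, ih]
    simp only [Aq, Hq_succ]
    have hne : ((n : ℚ) + 1) ≠ 0 := by positivity
    push_cast; field_simp; ring

lemma sumB (n : ℕ) :
    ∑ j ∈ range n, Bq j
      = -(14/27) * (n : ℚ) + 25/9 * (n:ℚ)^2 + 263/27 * (n:ℚ)^3
        + (-(4/9) * (n:ℚ) - 16/3 * (n:ℚ)^2 - 56/9 * (n:ℚ)^3) * Hq n
        + (-(2/3) * (n:ℚ) - 2 * (n:ℚ)^2 - 4/3 * (n:ℚ)^3) * Pq n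
        + (2/3 * (n:ℚ) + 2 * (n:ℚ)^2 + 4/3 * (n:ℚ)^3) * Hq n ^ 2 := by
  induction n with
  | zero => simp [Hq_zero, Pq_zero]
  | succ n ih =>
    rw [Finset.sum_range_succ, ih]
    simp only [Bq, Vq, Aq, Hq_succ, Pq_succ]
    have hne : ((n : ℚ) + 1) ≠ 0 := by positivity
    push_cast; field_simp; ring


lemma Hq_eq (n : ℕ) : Hq n = ∑ i ∈ range n, ((i : ℚ) + 1)⁻¹ := by
  unfold Hq harmonic; push_cast; rfl

-- reflected harmonic sum
lemma sumH_reflect (n : ℕ) : ∑ i ∈ range n, ((n - i : ℕ) : ℚ)⁻¹ = Hq n := by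
  rw [Hq_eq]
  rw [← Finset.sum_range_reflect (fun i => ((i : ℚ) + 1)⁻¹) n]
  refine Finset.sum_congr rfl fun i hi => ?_
  rw [Finset.mem_range] at hi
  congr 1
  have : (n - 1 - i) + 1 = n - i := by omega
  rw [← this]; push_cast; ring

lemma sum_partial_frac (n : ℕ) :
    ∑ i ∈ range n, (((n - i : ℕ) : ℚ)⁻¹ * ((i : ℚ) + 1)⁻¹)
      = 2 * Hq n / ((n : ℚ) + 1) := by
  have h1 : ∀ i ∈ range n,
      ((n - i : ℕ) : ℚ)⁻¹ * ((i : ℚ) + 1)⁻¹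
        = ((n : ℚ) + 1)⁻¹ * (((n - i : ℕ) : ℚ)⁻¹ + ((i : ℚ) + 1)⁻¹) := by
    intro i hi
    rw [Finset.mem_range] at hi
    have hc : ((n - i : ℕ) : ℚ) = (n : ℚ) - i := by
      rw [Nat.cast_sub hi.le]
    have h0 : ((n - i : ℕ) : ℚ) ≠ 0 := by
      rw [hc]
      have : (i : ℚ) < n := by exact_mod_cast hi
      linarith
    have h2 : ((i : ℚ) + 1) ≠ 0 := by positivity
    have h3 : ((n : ℚ) + 1) ≠ 0 := by positivity
    field_simp
    rw [hc]; ring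
  rw [Finset.sum_congr rfl h1, ← Finset.mul_sum, Finset.sum_add_distrib,
    sumH_reflect, ← Hq_eq]
  ring

lemma Dlem (n : ℕ) :
    ∑ i ∈ range n, Hq (n - 1 - i) * ((i : ℚ) + 1)⁻¹ = Hq n ^ 2 - Pq n := by
  induction n with
  | zero => simp [Hq_zero, Pq_zero]
  | succ n ih =>
    have step : ∑ i ∈ range (n + 1), Hq (n + 1 - 1 - i) * ((i : ℚ) + 1)⁻¹
        = (∑ i ∈ range n, Hq (n - 1 - i) * ((i : ℚ) + 1)⁻¹)
          + ∑ i ∈ range n, ((n - i : ℕ) : ℚ)⁻¹ * ((i : ℚ) + 1)⁻¹ := by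
      have e1 : ∀ i ∈ range n, Hq (n + 1 - 1 - i) * ((i : ℚ) + 1)⁻¹
          = Hq (n - 1 - i) * ((i : ℚ) + 1)⁻¹
            + ((n - i : ℕ) : ℚ)⁻¹ * ((i : ℚ) + 1)⁻¹ := by
        intro i hi
        rw [Finset.mem_range] at hi
        have h2 : n + 1 - 1 - i = (n - 1 - i) + 1 := by omega
        have h3 : (n - 1 - i) + 1 = n - i := by omega
        rw [h2, Hq_succ]
        have : ((n - 1 - i : ℕ) : ℚ) + 1 = ((n - i : ℕ) : ℚ) := by
          rw [← h3]; push_cast; ring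
        rw [this]; ring
      rw [Finset.sum_range_succ, Finset.sum_congr rfl e1]
      have : n + 1 - 1 - n = 0 := by omega
      rw [this, Hq_zero, Finset.sum_add_distrib]
      ring
    rw [step, ih, sum_partial_frac, Hq_succ, Pq_succ]
    have h3 : ((n : ℚ) + 1) ≠ 0 := by positivity
    field_simp
    ring

lemma Vlem (n : ℕ) :
    ∑ k ∈ range (n + 1), Hq k * Hq (n - k)
      = ((n : ℚ) + 1) * Hq n ^ 2 - ((n : ℚ) + 1) * Pq n - 2 * n * Hq n + 2 * n := by
  induction n with
  | zero => simp [Hq_zero, Pq_zero]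
  | succ n ih =>
    have step : ∑ k ∈ range (n + 2), Hq k * Hq (n + 1 - k)
        = (∑ k ∈ range (n + 1), Hq k * Hq (n - k))
          + ∑ k ∈ range (n + 1), Hq k * (((n - k : ℕ) : ℚ) + 1)⁻¹ := by
      have e1 : ∀ k ∈ range (n + 1), Hq k * Hq (n + 1 - k)
          = Hq k * Hq (n - k) + Hq k * (((n - k : ℕ) : ℚ) + 1)⁻¹ := by
        intro k hk
        rw [Finset.mem_range] at hk
        have h2 : n + 1 - k = (n - k) + 1 := by omega
        rw [h2, Hq_succ]; ring
      rw [Finset.sum_range_succ, Finset.sum_congr rfl e1]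
      have : n + 1 - (n + 1) = 0 := by omega
      rw [this, Hq_zero, Finset.sum_add_distrib]
      ring
    have refl1 : ∑ k ∈ range (n + 1), Hq k * (((n - k : ℕ) : ℚ) + 1)⁻¹
        = ∑ i ∈ range (n + 1), Hq (n + 1 - 1 - i) * ((i : ℚ) + 1)⁻¹ := by
      rw [← Finset.sum_range_reflect
        (fun k => Hq k * (((n - k : ℕ) : ℚ) + 1)⁻¹) (n + 1)]
      refine Finset.sum_congr rfl fun i hi => ?_
      rw [Finset.mem_range] at hi
      have h1 : n + 1 - 1 - i = n - i := by omega
      rw [h1]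
      rw [show n - (n - i) = i by omega]
    rw [step, ih, refl1, Dlem (n + 1), Hq_succ, Pq_succ]
    have h3 : ((n : ℚ) + 1) ≠ 0 := by positivity
    field_simp
    push_cast
    ring


lemma Ulem (n : ℕ) :
    ∑ j ∈ range n, ((j : ℚ) + 1) * Hq j * Hq (n - j)
      = ((n : ℚ) + 2) *
        (((n : ℚ) + 1) * Hq n ^ 2 - ((n : ℚ) + 1) * Pq n - 2 * n * Hq n + 2 * n)
        / 2 := by
  have hU' : ∑ j ∈ range n, ((j : ℚ) + 1) * Hq j * Hq (n - j)
      = ∑ j ∈ range (n + 1), ((j : ℚ) + 1) * Hq j * Hq (n - j) := by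
    rw [Finset.sum_range_succ]
    rw [show n - n = 0 by omega, Hq_zero]
    ring
  have hrefl : ∑ j ∈ range (n + 1), ((j : ℚ) + 1) * Hq j * Hq (n - j)
      = ∑ j ∈ range (n + 1), (((n - j : ℕ) : ℚ) + 1) * Hq (n - j) * Hq j := by
    rw [← Finset.sum_range_reflect
      (fun j => ((j : ℚ) + 1) * Hq j * Hq (n - j)) (n + 1)]
    refine Finset.sum_congr rfl fun j hj => ?_
    rw [Finset.mem_range] at hj
    rw [show n + 1 - 1 - j = n - j by omega]
    rw [show n - (n - j) = j by omega]
  have hdouble : (∑ j ∈ range (n + 1), ((j : ℚ) + 1) * Hq j * Hq (n - j)) * 2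
      = ((n : ℚ) + 2) * ∑ k ∈ range (n + 1), Hq k * Hq (n - k) := by
    rw [mul_two]
    nth_rewrite 2 [hrefl]
    rw [← Finset.sum_add_distrib, Finset.mul_sum]
    refine Finset.sum_congr rfl fun j hj => ?_
    rw [Finset.mem_range] at hj
    have hc : ((n - j : ℕ) : ℚ) = (n : ℚ) - j := by
      rw [Nat.cast_sub (by omega)]
    rw [hc]; ring
  rw [hU', ← Vlem n]
  linarith [hdouble]

lemma Jlem (n : ℕ) :
    ∑ j ∈ range n, (j : ℚ) * Hq (n - j)
      = (n : ℚ) * (((n : ℚ) + 1) * Hq n - n)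
        - ((n : ℚ) * ((n : ℚ) + 1) / 2 * Hq n - (n : ℚ) ^ 2 / 4 + (n : ℚ) / 4) := by
  have hrefl : ∑ j ∈ range n, (j : ℚ) * Hq (n - j)
      = ∑ j ∈ range n, ((n : ℚ) - ((j : ℚ) + 1)) * Hq (j + 1) := by
    rw [← Finset.sum_range_reflect (fun j => (j : ℚ) * Hq (n - j)) n]
    refine Finset.sum_congr rfl fun j hj => ?_
    rw [Finset.mem_range] at hj
    rw [show n - (n - 1 - j) = j + 1 by omega]
    rw [show ((n - 1 - j : ℕ) : ℚ) = (n : ℚ) - ((j : ℚ) + 1) by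
      rw [Nat.cast_sub (by omega), Nat.cast_sub (by omega)]; push_cast; ring]
  rw [hrefl]
  have : ∀ j ∈ range n, ((n : ℚ) - ((j : ℚ) + 1)) * Hq (j + 1)
      = (n : ℚ) * Hq (j + 1) - ((j : ℚ) + 1) * Hq (j + 1) := fun j _ => by ring
  rw [Finset.sum_congr rfl this, Finset.sum_sub_distrib, ← Finset.mul_sum,
    sumH, sumjH]

lemma Clem (n : ℕ) :
    ∑ j ∈ range n, Aq j * Aq (n - 1 - j)
      = 14/27 * (n : ℚ) + 11/9 * (n:ℚ)^2 + 169/27 * (n:ℚ)^3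
        + (4/9 * (n:ℚ) - 14/3 * (n:ℚ)^2 - 34/9 * (n:ℚ)^3) * Hq n
        + (-(4/3) * (n:ℚ) - 2 * (n:ℚ)^2 - 2/3 * (n:ℚ)^3) * Pq n
        + (4/3 * (n:ℚ) + 2 * (n:ℚ)^2 + 2/3 * (n:ℚ)^3) * Hq n ^ 2 := by
  induction n with
  | zero => simp
  | succ n ih =>
    have step : ∑ j ∈ range (n + 1), Aq j * Aq (n + 1 - 1 - j)
        = (∑ j ∈ range n, Aq j * Aq (n - 1 - j))
          + 2 * (∑ j ∈ range n, Aq j * Hq (n - j))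
          - 2 * ∑ j ∈ range n, Aq j := by
      simp only [Nat.add_sub_cancel]
      rw [Finset.sum_range_succ, show n - n = 0 by omega, Aq_zero, mul_zero,
        add_zero]
      have e1 : ∀ j ∈ range n, Aq j * Aq (n - j)
          = Aq j * Aq (n - 1 - j) + 2 * (Aq j * Hq (n - j)) - 2 * Aq j := by
        intro j hj
        rw [Finset.mem_range] at hj
        have h2 : n - j = (n - 1 - j) + 1 := by omega
        rw [h2, Aq_succ, ← h2]
        ring
      rw [Finset.sum_congr rfl e1]
      rw [Finset.sum_sub_distrib, Finset.sum_add_distrib, ← Finset.mul_sum,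
        ← Finset.mul_sum]
    have hK : ∑ j ∈ range n, Aq j * Hq (n - j)
        = 2 * (∑ j ∈ range n, ((j : ℚ) + 1) * Hq j * Hq (n - j))
          - 4 * ∑ j ∈ range n, (j : ℚ) * Hq (n - j) := by
      rw [Finset.mul_sum, Finset.mul_sum, ← Finset.sum_sub_distrib]
      refine Finset.sum_congr rfl fun j hj => ?_
      rw [Aq]; ring
    rw [step, ih, hK, Ulem, Jlem, sumA, Hq_succ, Pq_succ]
    have h3 : ((n : ℚ) + 1) ≠ 0 := by positivity
    push_cast
    field_simp
    ring


lemma sum_support_eq_eval_one (p : Polynomial ℚ) :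
    ∑ k ∈ p.support, p.coeff k = p.eval 1 := by
  rw [Polynomial.eval_eq_sum, Polynomial.sum_def]
  simp

lemma deriv_eval_one (p : Polynomial ℚ) :
    (Polynomial.derivative p).eval 1 = ∑ k ∈ p.support, p.coeff k * k := by
  rw [← Polynomial.sum_def p (fun k a => a * (k : ℚ))]
  induction p using Polynomial.induction_on' with
  | add p q hp hq =>
    rw [map_add, Polynomial.eval_add, hp, hq,
      Polynomial.sum_add_index p q _ (by simp) (by intros; ring)]
  | monomial n a =>
    rw [Polynomial.derivative_monomial, Polynomial.eval_monomial,
      Polynomial.sum_monomial_index _ _ (by simp)]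
    simp

lemma deriv2_eval_one (p : Polynomial ℚ) :
    (Polynomial.derivative (Polynomial.derivative p)).eval 1
      = ∑ k ∈ p.support, p.coeff k * ((k : ℚ) * ((k : ℚ) - 1)) := by
  rw [← Polynomial.sum_def p (fun k a => a * ((k : ℚ) * ((k : ℚ) - 1)))]
  induction p using Polynomial.induction_on' with
  | add p q hp hq =>
    rw [map_add, map_add, Polynomial.eval_add, hp, hq,
      Polynomial.sum_add_index p q _ (by simp) (by intros; ring)]
  | monomial n a =>
    rw [Polynomial.derivative_monomial, Polynomial.derivative_monomial,
      Polynomial.eval_monomial, Polynomial.sum_monomial_index _ _ (by simp)]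
    rcases n with _ | m
    · simp
    · rcases m with _ | l
      · simp
      · push_cast [Nat.add_sub_cancel]
        ring

lemma sum_shift (f : ℕ → ℚ) (n : ℕ) :
    ∑ k ∈ Icc 1 n, f (k - 1) = ∑ j ∈ range n, f j := by
  rw [← Finset.Ico_add_one_right_eq_Icc, Finset.sum_Ico_eq_sum_range]
  simp

lemma sum_shift2 (f : ℕ → ℚ) (n : ℕ) :
    ∑ k ∈ Icc 1 n, f (n - k) = ∑ j ∈ range n, f j := by
  rw [← Finset.Ico_add_one_right_eq_Icc, Finset.sum_Ico_eq_sum_range]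
  rw [show n + 1 - 1 = n from rfl]
  rw [← Finset.sum_range_reflect f n]
  refine Finset.sum_congr rfl fun j hj => ?_
  rw [Finset.mem_range] at hj
  congr 1
  omega

lemma eval1_d_pow_mul (m : ℕ) (P : Polynomial ℚ) :
    (Polynomial.derivative ((Polynomial.X : Polynomial ℚ) ^ m * P)).eval 1
      = ((m : ℕ) : ℚ) * P.eval 1 + (Polynomial.derivative P).eval 1 := by
  rw [Polynomial.derivative_mul, Polynomial.derivative_X_pow]
  simp

lemma eval1_d2_pow_mul (m : ℕ) (P : Polynomial ℚ) :
    (Polynomial.derivative (Polynomial.derivative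
        ((Polynomial.X : Polynomial ℚ) ^ m * P))).eval 1
      = (m : ℚ) * ((m - 1 : ℕ) : ℚ) * P.eval 1
        + 2 * (m : ℚ) * (Polynomial.derivative P).eval 1
        + (Polynomial.derivative (Polynomial.derivative P)).eval 1 := by
  rw [Polynomial.derivative_mul, Polynomial.derivative_X_pow]
  rw [Polynomial.derivative_add, Polynomial.derivative_mul,
    Polynomial.derivative_mul, Polynomial.derivative_mul,
    Polynomial.derivative_C, Polynomial.derivative_X_pow]
  simp [Polynomial.derivative_X_pow]
  ring


section Rec

variable (g : ℕ → Polynomial ℚ) (hg0 : g 0 = 1)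
  (hgrec : ∀ n : ℕ, 1 ≤ n →
      (n : ℚ) • g n = Polynomial.X ^ (n - 1) *
        ∑ k ∈ Finset.Icc 1 n, g (k - 1) * g (n - k))

include hg0 hgrec

lemma g_eval_one : ∀ n, (g n).eval 1 = 1 := by
  intro n
  induction n using Nat.strong_induction_on with
  | _ n ih =>
    rcases Nat.eq_zero_or_pos n with h0 | h1
    · rw [h0, hg0]; simp
    · have h := congrArg (Polynomial.eval 1) (hgrec n h1)
      rw [Polynomial.smul_eq_C_mul] at h
      simp only [Polynomial.eval_mul, Polynomial.eval_C, Polynomial.eval_pow,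
        Polynomial.eval_X, one_pow, one_mul, Polynomial.eval_finset_sum] at h
      have hsum : ∑ k ∈ Icc 1 n, ((g (k-1)).eval 1 * (g (n-k)).eval 1) = n := by
        have : ∀ k ∈ Icc 1 n, (g (k-1)).eval 1 * (g (n-k)).eval 1 = 1 := by
          intro k hk
          rw [Finset.mem_Icc] at hk
          rw [ih (k-1) (by omega), ih (n-k) (by omega)]
          norm_num
        rw [Finset.sum_congr rfl this]
        simp [Nat.card_Icc]
      rw [hsum] at h
      have hn : (n : ℚ) ≠ 0 := by
        simp only [ne_eq, Nat.cast_eq_zero]; omega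
      field_simp at h
      exact h

-- abbreviations
noncomputable def av (n : ℕ) : ℚ := (Polynomial.derivative (g n)).eval 1
noncomputable def bv (n : ℕ) : ℚ :=
  (Polynomial.derivative (Polynomial.derivative (g n))).eval 1

lemma P_eval (n : ℕ) (h1 : 1 ≤ n) :
    (∑ k ∈ Finset.Icc 1 n, g (k - 1) * g (n - k)).eval 1 = n := by
  rw [Polynomial.eval_finset_sum]
  have : ∀ k ∈ Icc 1 n, ((g (k-1)) * (g (n-k))).eval 1 = 1 := by
    intro k hk
    rw [Polynomial.eval_mul, g_eval_one g hg0 hgrec, g_eval_one g hg0 hgrec]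
    norm_num
  rw [Finset.sum_congr rfl this]
  simp [Nat.card_Icc]

lemma P_deriv_eval (n : ℕ) :
    (Polynomial.derivative (∑ k ∈ Finset.Icc 1 n, g (k - 1) * g (n - k))).eval 1
      = 2 * ∑ j ∈ range n, av g j := by
  rw [map_sum, Polynomial.eval_finset_sum]
  have : ∀ k ∈ Icc 1 n, (Polynomial.derivative ((g (k-1)) * (g (n-k)))).eval 1
      = av g (k-1) + av g (n-k) := by
    intro k hk
    rw [Polynomial.derivative_mul, Polynomial.eval_add, Polynomial.eval_mul,
      Polynomial.eval_mul, g_eval_one g hg0 hgrec, g_eval_one g hg0 hgrec]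
    simp [av]
  rw [Finset.sum_congr rfl this, Finset.sum_add_distrib,
    sum_shift (av g) n, sum_shift2 (av g) n]
  ring

lemma P_deriv2_eval (n : ℕ) :
    (Polynomial.derivative (Polynomial.derivative
        (∑ k ∈ Finset.Icc 1 n, g (k - 1) * g (n - k)))).eval 1
      = 2 * (∑ j ∈ range n, bv g j)
        + 2 * ∑ j ∈ range n, av g j * av g (n - 1 - j) := by
  rw [map_sum, map_sum, Polynomial.eval_finset_sum]
  have : ∀ k ∈ Icc 1 n,
      (Polynomial.derivative (Polynomial.derivative ((g (k-1)) * (g (n-k))))).eval 1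
      = bv g (k-1) + 2 * (av g (k-1) * av g (n-k)) + bv g (n-k) := by
    intro k hk
    rw [Polynomial.derivative_mul, Polynomial.derivative_add,
      Polynomial.derivative_mul, Polynomial.derivative_mul]
    simp only [Polynomial.eval_add, Polynomial.eval_mul,
      g_eval_one g hg0 hgrec, bv, av]
    ring
  rw [Finset.sum_congr rfl this, Finset.sum_add_distrib, Finset.sum_add_distrib,
    sum_shift (bv g) n, sum_shift2 (bv g) n]
  have hmid : ∑ k ∈ Icc 1 n, av g (k-1) * av g (n-k)
      = ∑ j ∈ range n, av g j * av g (n - 1 - j) := by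
    rw [← sum_shift (fun j => av g j * av g (n - 1 - j)) n]
    refine Finset.sum_congr rfl fun k hk => ?_
    rw [Finset.mem_Icc] at hk
    rw [show n - 1 - (k - 1) = n - k by omega]
  rw [← Finset.mul_sum, hmid]
  ring

lemma a_eq (n : ℕ) : av g n = Aq n := by
  induction n using Nat.strong_induction_on with
  | _ n ih =>
    rcases Nat.eq_zero_or_pos n with h0 | h1
    · rw [h0]
      simp [av, hg0, Aq, Hq_zero]
    · have h := congrArg (Polynomial.eval 1) (congrArg Polynomial.derivative (hgrec n h1))
      rw [Polynomial.smul_eq_C_mul, Polynomial.derivative_mul,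
        Polynomial.derivative_C] at h
      simp only [Polynomial.eval_add, Polynomial.eval_mul, Polynomial.eval_C,
        zero_mul, zero_add] at h
      rw [eval1_d_pow_mul, P_eval g hg0 hgrec n h1, P_deriv_eval g hg0 hgrec n] at h
      have hsa : ∑ j ∈ range n, av g j = ∑ j ∈ range n, Aq j := by
        refine Finset.sum_congr rfl fun j hj => ih j (Finset.mem_range.mp hj)
      rw [hsa, sumA] at h
      have hcast : ((n - 1 : ℕ) : ℚ) = (n : ℚ) - 1 := by
        rw [Nat.cast_sub h1]; norm_num
      rw [hcast] at h
      have hn : (n : ℚ) ≠ 0 := by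
        simp only [ne_eq, Nat.cast_eq_zero]; omega
      refine mul_left_cancel₀ hn ?_
      show (n:ℚ) * (Polynomial.derivative (g n)).eval 1 = (n : ℚ) * Aq n
      rw [h, Aq]; ring

lemma b_eq (n : ℕ) : bv g n = Bq n := by
  induction n using Nat.strong_induction_on with
  | _ n ih =>
    rcases Nat.lt_or_ge n 2 with h0 | h2
    · interval_cases n
      · simp [bv, hg0, Bq, Vq, Aq, Hq_zero, Pq_zero]
      · have hg1 : g 1 = 1 := by
          have h := hgrec 1 (le_refl 1)
          simp [Finset.Icc_self, hg0] at h
          simpa using h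
        rw [show bv g 1 = 0 by simp [bv, hg1]]
        rw [show Bq 1 = 0 by
          norm_num [Bq, Vq, Aq, Hq_succ, Hq_zero, Pq_succ, Pq_zero]]
    · have h1 : 1 ≤ n := by omega
      have h := congrArg (Polynomial.eval 1)
        (congrArg Polynomial.derivative (congrArg Polynomial.derivative (hgrec n h1)))
      rw [Polynomial.derivative_smul, Polynomial.derivative_smul,
        Polynomial.eval_smul, smul_eq_mul] at h
      rw [eval1_d2_pow_mul, P_eval g hg0 hgrec n h1, P_deriv_eval g hg0 hgrec n,
        P_deriv2_eval g hg0 hgrec n] at h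
      have hsa : ∀ j ∈ range n, av g j * av g (n - 1 - j) = Aq j * Aq (n - 1 - j) := by
        intro j hj
        rw [a_eq g hg0 hgrec, a_eq g hg0 hgrec]
      have hsb : ∑ j ∈ range n, bv g j = ∑ j ∈ range n, Bq j := by
        refine Finset.sum_congr rfl fun j hj => ih j (Finset.mem_range.mp hj)
      have hsa2 : ∑ j ∈ range n, av g j = ∑ j ∈ range n, Aq j := by
        refine Finset.sum_congr rfl fun j _ => a_eq g hg0 hgrec j
      rw [Finset.sum_congr rfl hsa, hsb, hsa2, sumA, sumB, Clem] at h
      have hc1 : ((n - 1 : ℕ) : ℚ) = (n : ℚ) - 1 := by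
        rw [Nat.cast_sub h1]; norm_num
      have hc2 : ((n - 1 - 1 : ℕ) : ℚ) = (n : ℚ) - 2 := by
        rw [show n - 1 - 1 = n - 2 by omega, Nat.cast_sub h2]; norm_num
      rw [hc1, hc2] at h
      have hn : (n : ℚ) ≠ 0 := by
        simp only [ne_eq, Nat.cast_eq_zero]; omega
      refine mul_left_cancel₀ hn ?_
      show (n:ℚ) * (Polynomial.derivative (Polynomial.derivative (g n))).eval 1
        = (n : ℚ) * Bq n
      rw [h, Bq, Vq, Aq]; ring


lemma a_eq2 (n : ℕ) : (Polynomial.derivative (g n)).eval 1 = Aq n :=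
  a_eq g hg0 hgrec n

lemma b_eq2 (n : ℕ) :
    (Polynomial.derivative (Polynomial.derivative (g n))).eval 1 = Bq n :=
  b_eq g hg0 hgrec n

end Rec

lemma Hq_nonneg (n : ℕ) : 0 ≤ Hq n := by
  rw [Hq_eq]; exact Finset.sum_nonneg fun i _ => by positivity

lemma Pq_nonneg (n : ℕ) : 0 ≤ Pq n := by
  unfold Pq; exact Finset.sum_nonneg fun i _ => by positivity

lemma Vq_le (n : ℕ) (h1 : 1 ≤ n) : Vq n ≤ 20 * (n : ℚ) ^ 2 := by
  have h := Hq_nonneg n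
  have h' := Pq_nonneg n
  have hn : (1 : ℚ) ≤ (n : ℚ) := by exact_mod_cast h1
  rw [Vq]
  nlinarith [sq_nonneg ((n : ℚ) + 1)]

end QS

open QS

theorem quicksort_coefficient_of_variation_tendsto_zero
    (g : ℕ → Polynomial ℚ)
    (hg0 : g 0 = 1)
    (hgrec : ∀ n : ℕ, 1 ≤ n →
      (n : ℚ) • g n = Polynomial.X ^ (n - 1) *
        ∑ k ∈ Finset.Icc 1 n, g (k - 1) * g (n - k))
    (μ : ℕ → ℚ)
    (hμ : ∀ n, μ n = (Polynomial.derivative (g n)).eval 1)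
    (m : ℕ → ℕ → ℚ)
    (hm : ∀ r n, m r n =
      ∑ k ∈ (g n).support, (g n).coeff k * ((k : ℚ) - μ n) ^ r) :
    Filter.Tendsto (fun n : ℕ => Real.sqrt (m 2 n : ℝ) / (μ n : ℝ))
      Filter.atTop (nhds 0) := by
  have hμA : ∀ n, μ n = Aq n := fun n => by
    rw [hμ n, a_eq2 g hg0 hgrec n]
  have hm2 : ∀ n, m 2 n = Vq n := by
    intro n
    rw [hm 2 n]
    have expand : ∀ k ∈ (g n).support,
        (g n).coeff k * ((k : ℚ) - μ n) ^ 2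
          = (g n).coeff k * ((k : ℚ) * ((k : ℚ) - 1))
            + (1 - 2 * μ n) * ((g n).coeff k * k)
            + (μ n) ^ 2 * (g n).coeff k := by
      intro k _; ring
    rw [Finset.sum_congr rfl expand, Finset.sum_add_distrib,
      Finset.sum_add_distrib, ← Finset.mul_sum, ← Finset.mul_sum,
      ← deriv2_eval_one, ← deriv_eval_one, sum_support_eq_eval_one,
      g_eval_one g hg0 hgrec n, b_eq2 g hg0 hgrec n, a_eq2 g hg0 hgrec n, hμA n, Bq]
    ring
  -- limits
  have hcast : Filter.Tendsto (fun n : ℕ => (n : ℝ) + 1) atTop atTop :=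
    tendsto_atTop_add_const_right _ 1 tendsto_natCast_atTop_atTop
  have hlog : Filter.Tendsto (fun n : ℕ => Real.log ((n : ℝ) + 1)) atTop atTop :=
    Real.tendsto_log_atTop.comp hcast
  have hden : Filter.Tendsto (fun n : ℕ => 2 * Real.log ((n : ℝ) + 1) - 4)
      atTop atTop := by
    have := hlog.const_mul_atTop (show (0:ℝ) < 2 by norm_num)
    simpa [sub_eq_add_neg] using tendsto_atTop_add_const_right _ (-4) this
  have hg : Filter.Tendsto
      (fun n : ℕ => Real.sqrt 20 / (2 * Real.log ((n : ℝ) + 1) - 4))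
      atTop (nhds 0) := Filter.Tendsto.div_atTop tendsto_const_nhds hden
  refine tendsto_of_tendsto_of_tendsto_of_le_of_le' tendsto_const_nhds hg ?_ ?_
  · -- eventually 0 ≤ f n
    filter_upwards [hden.eventually_ge_atTop 1, eventually_ge_atTop 1]
      with n hn3 hn1
    have hH : Real.log ((n : ℝ) + 1) ≤ ((Hq n : ℚ) : ℝ) := by
      have := log_add_one_le_harmonic n
      push_cast at this
      simpa [Hq] using this
    have hμr : (0 : ℝ) ≤ ((μ n : ℚ) : ℝ) := by
      rw [hμA n]
      have hA : ((Aq n : ℚ) : ℝ)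
          = 2 * ((n : ℝ) + 1) * ((Hq n : ℚ) : ℝ) - 4 * (n : ℝ) := by
        rw [Aq]; push_cast; ring
      rw [hA]
      have hn' : (1 : ℝ) ≤ (n : ℝ) := by exact_mod_cast hn1
      nlinarith [hH, Real.log_nonneg (by linarith : (1:ℝ) ≤ (n:ℝ) + 1)]
    positivity
  · -- eventually f n ≤ g n
    filter_upwards [hden.eventually_ge_atTop 2, eventually_ge_atTop 1]
      with n hd2 hn1
    have hn' : (1 : ℝ) ≤ (n : ℝ) := by exact_mod_cast hn1
    have hH : Real.log ((n : ℝ) + 1) ≤ ((Hq n : ℚ) : ℝ) := by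
      have := log_add_one_le_harmonic n
      push_cast at this
      simpa [Hq] using this
    set L := Real.log ((n : ℝ) + 1) with hL
    have hnum : Real.sqrt ((m 2 n : ℚ) : ℝ) ≤ Real.sqrt 20 * (n : ℝ) := by
      have h1 : ((m 2 n : ℚ) : ℝ) ≤ 20 * (n : ℝ) ^ 2 := by
        rw [hm2 n]
        exact_mod_cast Vq_le n hn1
      calc Real.sqrt ((m 2 n : ℚ) : ℝ) ≤ Real.sqrt (20 * (n : ℝ) ^ 2) :=
            Real.sqrt_le_sqrt h1
        _ = Real.sqrt 20 * (n : ℝ) := by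
            rw [Real.sqrt_mul (by norm_num : (0:ℝ) ≤ 20),
              Real.sqrt_sq (by linarith : (0:ℝ) ≤ (n : ℝ))]
    have hμlow : (n : ℝ) * (2 * L - 4) ≤ ((μ n : ℚ) : ℝ) := by
      rw [hμA n]
      have hA : ((Aq n : ℚ) : ℝ)
          = 2 * ((n : ℝ) + 1) * ((Hq n : ℚ) : ℝ) - 4 * (n : ℝ) := by
        rw [Aq]; push_cast; ring
      rw [hA]
      have hL0 : 0 ≤ L := le_trans (by norm_num) (by linarith : (2:ℝ) ≤ L)
      nlinarith [hH]
    have hpos : (0 : ℝ) < (n : ℝ) * (2 * L - 4) := by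
      have : (2:ℝ) ≤ 2 * L - 4 := hd2
      nlinarith
    calc Real.sqrt ((m 2 n : ℚ) : ℝ) / ((μ n : ℚ) : ℝ)
        ≤ (Real.sqrt 20 * (n : ℝ)) / ((n : ℝ) * (2 * L - 4)) :=
          div_le_div₀ (by positivity) hnum hpos hμlow
      _ = Real.sqrt 20 / (2 * L - 4) := by
          rw [mul_comm (Real.sqrt 20) (n : ℝ), mul_div_mul_left]
          exact by positivity
end
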